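/- For all positive integers r < k, the sequence of optimal code densities S(n,k,r)/n^r converges as n → ∞ to a limit s(k,r), and moreover S(n,k,r)/n^r ≥ s(k,r) for every positive integer n. -/

import Mathlib

open MeasureTheory Filter Topology ENNReal

/-- `x` covers `a` if `x` is a subsequence of `a`. -/
def Covers {X : Type*} {r k : ℕ} (x : Fin r → X) (a : Fin k → X) : Prop :=
  ∃ g : Fin r → Fin k, StrictMono g ∧ ∀ i, a (g i) = x i

/-- `C ⊆ X^r` is a covering `(k-r)`-insertion code over `X`: every sequence in `X^k`
is covered by some sequence in `C`. -/
def IsCoveringCode {X : Type*} (r k : ℕ) (C : Set (Fin r → X)) : Prop :=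
  ∀ a : Fin k → X, ∃ x ∈ C, Covers x a

/-- Minimum size of a covering `(k-r)`-insertion code over the alphabet `[n]`. -/
noncomputable def covNum (n k r : ℕ) : ℕ :=
  sInf {m | ∃ C : Finset (Fin r → Fin n), IsCoveringCode r k (↑C : Set (Fin r → Fin n)) ∧ C.card = m}

/-- The unit cube `[0,1]^r`. -/
def unitCube (r : ℕ) : Set (Fin r → ℝ) := {x | ∀ i, x i ∈ Set.Icc (0 : ℝ) 1}

/-- `C ⊆ [0,1]^r` covers `[0,1]^k`. -/
def CoversCube (r k : ℕ) (C : Set (Fin r → ℝ)) : Prop :=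
  ∀ a ∈ unitCube k, ∃ x ∈ C, Covers x a

/-- Delete the `i`-th coordinate of a length `r+1` sequence. -/
def deleteAt {X : Type*} {r : ℕ} (i : Fin (r + 1)) (x : Fin (r + 1) → X) : Fin r → X :=
  x ∘ i.succAbove

/-- `extSet C i` is the set `C_i` of sequences in `X^{r+1}` whose subsequence obtained by
deleting the `i`-th coordinate belongs to `C`. -/
def extSet {X : Type*} {r : ℕ} (C : Set (Fin r → X)) (i : Fin (r + 1)) :
    Set (Fin (r + 1) → X) :=
  {x | deleteAt i x ∈ C}

/-- A set of sequences is symmetric if it is closed under permuting the coordinates. -/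
def IsSymmetric {X : Type*} {k : ℕ} (M : Set (Fin k → X)) : Prop :=
  ∀ x ∈ M, ∀ σ : Equiv.Perm (Fin k), x ∘ σ ∈ M

/-- The symmetric closure of a set of sequences. -/
def SymClosure {X : Type*} {k : ℕ} (M : Set (Fin k → X)) : Set (Fin k → X) :=
  {x | ∃ σ : Equiv.Perm (Fin k), x ∘ σ ∈ M}

/-- A Turán `(n,k,r)`-system: a family of `r`-element subsets of `[n]` such that every
`k`-element subset of `[n]` contains a member of the family. -/
def IsTuranSystem (n k r : ℕ) (F : Finset (Finset (Fin n))) : Prop :=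
  (∀ A ∈ F, A.card = r) ∧ ∀ K : Finset (Fin n), K.card = k → ∃ A ∈ F, A ⊆ K

/-- Minimum size of a Turán `(n,k,r)`-system. -/
noncomputable def turanNum (n k r : ℕ) : ℕ :=
  sInf {m | ∃ F : Finset (Finset (Fin n)), IsTuranSystem n k r F ∧ F.card = m}

/-- The full set of sequences is a covering code. -/
lemma isCoveringCode_univ {n k r : ℕ} (hrk : r ≤ k) :
    IsCoveringCode r k (↑(Finset.univ : Finset (Fin r → Fin n)) : Set (Fin r → Fin n)) := by
  intro a
  refine ⟨a ∘ Fin.castLE hrk, by simp, Fin.castLE hrk, ?_, fun i => rfl⟩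
  intro i j h
  exact h

lemma covNum_set_nonempty {n k r : ℕ} (hrk : r ≤ k) :
    {m | ∃ C : Finset (Fin r → Fin n), IsCoveringCode r k (↑C : Set (Fin r → Fin n)) ∧
      C.card = m}.Nonempty :=
  ⟨(Finset.univ : Finset (Fin r → Fin n)).card, Finset.univ, isCoveringCode_univ hrk, rfl⟩

/-- Subdivision bound: `S(N,k,r) ≤ S(n,k,r) * q^r` when `N ≤ n*q`. -/
lemma covNum_subdiv {k r : ℕ} (hrk : r ≤ k) (n q N : ℕ) (hq : 0 < q) (hN : N ≤ n * q) :
    covNum N k r ≤ covNum n k r * q ^ r := by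
  obtain ⟨C, hC, hcard⟩ := Nat.sInf_mem (covNum_set_nonempty (n := n) (k := k) (r := r) hrk)
  set φ : Fin N → Fin n := fun y =>
    ⟨y.val / q, (Nat.div_lt_iff_lt_mul hq).2 (lt_of_lt_of_le y.isLt hN)⟩ with hφ
  set C' : Finset (Fin r → Fin N) :=
    Finset.univ.filter (fun y : Fin r → Fin N => (fun i => φ (y i)) ∈ C) with hC'
  have hcov : IsCoveringCode r k (↑C' : Set (Fin r → Fin N)) := by
    intro a
    obtain ⟨x, hxC, g, hg, hgx⟩ := hC (fun i => φ (a i))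
    refine ⟨fun i => a (g i), ?_, g, hg, fun i => rfl⟩
    have hx : (fun i => φ (a (g i))) = x := funext fun i => hgx i
    rw [Finset.mem_coe, hC', Finset.mem_filter]
    exact ⟨Finset.mem_univ _, hx ▸ hxC⟩
  have hcard' : C'.card ≤ C.card * q ^ r := by
    have := Finset.card_le_card_of_injOn
      (f := fun y : Fin r → Fin N =>
        ((fun i => φ (y i), fun i => (⟨(y i).val % q, Nat.mod_lt _ hq⟩ : Fin q)) :
          (Fin r → Fin n) × (Fin r → Fin q)))
      (s := C') (t := C ×ˢ (Finset.univ : Finset (Fin r → Fin q)))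
      (by
        intro y hy
        simp only [hC', Finset.mem_coe, Finset.mem_filter] at hy
        simp [Finset.mem_product, hy.2])
      (by
        intro y _ y' _ h
        have h1 := congrArg Prod.fst h
        have h2 := congrArg Prod.snd h
        funext i
        have e1 : (y i).val / q = (y' i).val / q := congrArg Fin.val (congrFun h1 i)
        have e2 : (y i).val % q = (y' i).val % q := congrArg Fin.val (congrFun h2 i)
        have d1 := Nat.div_add_mod (y i).val q
        have d2 := Nat.div_add_mod (y' i).val q
        exact Fin.ext (by rw [← d1, ← d2, e1, e2]))
    calc C'.card ≤ (C ×ˢ (Finset.univ : Finset (Fin r → Fin q))).card := this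
      _ = C.card * q ^ r := by
          rw [Finset.card_product]
          simp
  calc covNum N k r ≤ C'.card := Nat.sInf_le ⟨C', hcov, rfl⟩
    _ ≤ C.card * q ^ r := hcard'
    _ = covNum n k r * q ^ r := by rw [hcard]; rfl

/-- For positive integers `r < k`, the densities `S(n,k,r)/n^r` converge to a
limit `s(k,r)` as `n → ∞`, and `S(n,k,r)/n^r ≥ s(k,r)` for every positive integer `n`. -/
theorem covNum_density_tendsto {r k : ℕ} (hr : 0 < r) (hrk : r < k) :
    ∃ s : ℝ, Tendsto (fun n : ℕ => (covNum n k r : ℝ) / (n : ℝ) ^ r) atTop (𝓝 s) ∧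
      ∀ n : ℕ, 0 < n → s ≤ (covNum n k r : ℝ) / (n : ℝ) ^ r := by
  set f : ℕ → ℝ := fun n => (covNum n k r : ℝ) / (n : ℝ) ^ r with hf
  have hf_nonneg : ∀ n, 0 ≤ f n := fun n =>
    div_nonneg (Nat.cast_nonneg _) (by positivity)
  set g : ℕ → ℝ := fun n => f (n + 1) with hg
  have hbdd : BddBelow (Set.range g) := ⟨0, by rintro x ⟨m, rfl⟩; exact hf_nonneg _⟩
  set s : ℝ := ⨅ m, g m with hs
  refine ⟨s, ?_, ?_⟩
  · -- Key pointwise bound: for `N ≥ 1`, `f N ≤ f (n+1) * ((N + n + 1)/N)^r`.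
    have key : ∀ n N : ℕ, 0 < N →
        f N ≤ f (n + 1) * (((N : ℝ) + (n + 1)) / N) ^ r := by
      intro n N hNpos
      set q : ℕ := N / (n + 1) + 1 with hqdef
      have hq : 0 < q := Nat.succ_pos _
      have hNle : N ≤ (n + 1) * q := by
        have h := (Nat.div_lt_iff_lt_mul (Nat.succ_pos n)).1 (Nat.lt_succ_self (N / (n + 1)))
        calc N ≤ q * (n + 1) := le_of_lt h
          _ = (n + 1) * q := Nat.mul_comm _ _
      have hnat : covNum N k r ≤ covNum (n + 1) k r * q ^ r :=
        covNum_subdiv hrk.le (n + 1) q N hq hNle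
      have hNr : (0 : ℝ) < (N : ℝ) ^ r := by positivity
      have step1 : f N ≤ (covNum (n + 1) k r : ℝ) * (q : ℝ) ^ r / (N : ℝ) ^ r := by
        have hle : (covNum N k r : ℝ) ≤ (covNum (n + 1) k r : ℝ) * (q : ℝ) ^ r := by
          exact_mod_cast hnat
        calc f N = (covNum N k r : ℝ) / (N : ℝ) ^ r := rfl
          _ ≤ _ := by gcongr
      have hfn1 : f (n + 1) = (covNum (n + 1) k r : ℝ) / ((n : ℝ) + 1) ^ r := by
        simp only [hf, Nat.cast_add, Nat.cast_one]
      have step2 : (covNum (n + 1) k r : ℝ) * (q : ℝ) ^ r / (N : ℝ) ^ r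
          = f (n + 1) * (((n : ℝ) + 1) * q / N) ^ r := by
        rw [hfn1, div_pow, mul_pow]
        have h1 : ((n : ℝ) + 1) ^ r ≠ 0 := by positivity
        have h2 : ((N : ℝ)) ^ r ≠ 0 := by positivity
        field_simp
      have step3 : f (n + 1) * (((n : ℝ) + 1) * q / N) ^ r
          ≤ f (n + 1) * (((N : ℝ) + (n + 1)) / N) ^ r := by
        have hle : ((n : ℝ) + 1) * q ≤ (N : ℝ) + (n + 1) := by
          have hnat2 : (n + 1) * q ≤ N + (n + 1) := by
            have h1 : (n + 1) * (N / (n + 1)) ≤ N := Nat.mul_div_le N (n + 1)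
            calc (n + 1) * q = (n + 1) * (N / (n + 1)) + (n + 1) := by
                  rw [hqdef]; ring
              _ ≤ N + (n + 1) := by omega
          exact_mod_cast hnat2
        have hnn : (0 : ℝ) ≤ ((n : ℝ) + 1) * q / N := by positivity
        gcongr
      calc f N ≤ (covNum (n + 1) k r : ℝ) * (q : ℝ) ^ r / (N : ℝ) ^ r := step1
        _ = f (n + 1) * (((n : ℝ) + 1) * q / N) ^ r := step2
        _ ≤ f (n + 1) * (((N : ℝ) + (n + 1)) / N) ^ r := step3
    -- the bounding sequence tends to `f (n+1)`
    have hbound_tendsto : ∀ n : ℕ,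
        Tendsto (fun N : ℕ => f (n + 1) * (((N : ℝ) + (n + 1)) / N) ^ r) atTop
          (𝓝 (f (n + 1))) := by
      intro n
      have h1 : Tendsto (fun N : ℕ => ((N : ℝ) + (n + 1)) / N) atTop (𝓝 1) := by
        have h2 : Tendsto (fun N : ℕ => 1 + ((n : ℝ) + 1) / N) atTop (𝓝 (1 + 0)) :=
          tendsto_const_nhds.add (tendsto_const_div_atTop_nhds_zero_nat _)
        rw [add_zero] at h2
        refine h2.congr' ?_
        filter_upwards [eventually_gt_atTop 0] with N hN
        have hN0 : (N : ℝ) ≠ 0 := by positivity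
        have he : ((N : ℝ) + ((n : ℝ) + 1)) / (N : ℝ) = 1 + ((n : ℝ) + 1) / N := by
          rw [add_div, div_self hN0]
        exact he.symm
      have := (h1.pow r).const_mul (f (n + 1))
      simpa using this
    rw [tendsto_order]
    constructor
    · intro a ha
      filter_upwards [eventually_ge_atTop 1] with N hN
      obtain ⟨m, rfl⟩ : ∃ m, N = m + 1 := ⟨N - 1, by omega⟩
      exact lt_of_lt_of_le ha (ciInf_le hbdd m)
    · intro b hb
      obtain ⟨n, hn⟩ := exists_lt_of_ciInf_lt hb
      have hev := (hbound_tendsto n).eventually_lt_const hn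
      filter_upwards [hev, eventually_gt_atTop 0] with N h1 h2
      exact lt_of_le_of_lt (key n N h2) h1
  · intro n hn
    obtain ⟨m, rfl⟩ : ∃ m, n = m + 1 := ⟨n - 1, by omega⟩
    exact ciInf_le hbdd m
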